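/- Let K be the 2×2 matrix K = [[0,1],[−1,0]], let b₀ ≠ 0 and C_b > 0. There exists a constant C > 0, depending only on b₀ and C_b, such that for all ε ∈ (0,1], τ > 0, s > 0 and β ∈ ℝ with |β − b₀| ≤ C_b ε^s and C_b ε^s ≤ |b₀|/2, the matrices R = (β τ² K + ε τ I₂)/(β² τ² + ε²) and R₀ = K/b₀ satisfy ‖R − R₀‖ ≤ C (ε^s τ² + ε² + ε τ)/(ε² + τ²), where ‖·‖ is the operator norm on 2×2 real matrices. -/

import Mathlib

set_option maxHeartbeats 1000000
set_option synthInstance.maxHeartbeats 200000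


/-- With `K = [[0,1],[-1,0]]`, `b₀ ≠ 0`, `C_b > 0`, there is `C > 0`
(depending only on `b₀, C_b`) such that for all `ε ∈ (0,1]`, `τ > 0`, `s > 0`, `β ∈ ℝ`
with `|β − b₀| ≤ C_b ε^s` and `C_b ε^s ≤ |b₀|/2`, the matrices
`R = (βτ²K + ετI₂)/(β²τ² + ε²)` and `R₀ = K/b₀` satisfy
`‖R − R₀‖ ≤ C (ε^s τ² + ε² + ετ)/(ε² + τ²)` in the operator norm
(on `ℝ²` with the Euclidean norm). -/
theorem stmt_15 (b₀ Cb : ℝ) (hb₀ : b₀ ≠ 0) (hCb : 0 < Cb)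
    (K : Matrix (Fin 2) (Fin 2) ℝ) (hK : K = !![0, 1; -1, 0]) :
    ∃ C > (0 : ℝ), ∀ ε τ s β : ℝ, ε ∈ Set.Ioc (0 : ℝ) 1 → 0 < τ → 0 < s →
      |β - b₀| ≤ Cb * ε ^ s → Cb * ε ^ s ≤ |b₀| / 2 →
      ‖Matrix.toEuclideanCLM (𝕜 := ℝ)
          ((β ^ 2 * τ ^ 2 + ε ^ 2)⁻¹ •
              ((β * τ ^ 2) • K + (ε * τ) • (1 : Matrix (Fin 2) (Fin 2) ℝ))
            - b₀⁻¹ • K)‖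
        ≤ C * ((ε ^ s * τ ^ 2 + ε ^ 2 + ε * τ) / (ε ^ 2 + τ ^ 2)) := by
  have hb₀' : 0 < |b₀| := abs_pos.mpr hb₀
  -- K is unitary, so its image has norm 1
  have hKunit : star K * K = 1 ∧ K * star K = 1 := by
    constructor <;>
    · ext i j
      fin_cases i <;> fin_cases j <;>
        simp [hK, Matrix.mul_apply, Fin.sum_univ_succ, Matrix.star_apply]
  have hnormK : ‖Matrix.toEuclideanCLM (𝕜 := ℝ) K‖ = 1 := by
    apply CStarRing.norm_of_mem_unitary
    constructor
    · rw [← map_star, ← map_mul, hKunit.1, map_one]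
    · rw [← map_star, ← map_mul, hKunit.2, map_one]
  set m : ℝ := min (b₀ ^ 2 / 4) 1 with hm
  have hm0 : 0 < m := lt_min (by positivity) one_pos
  refine ⟨((3 / 2) * |b₀| * Cb + 1) / (m * |b₀|) + 1 / m, by positivity, ?_⟩
  intro ε τ s β hε hτ hs hβb hsmall
  obtain ⟨hε0, hε1⟩ := hε
  set D : ℝ := β ^ 2 * τ ^ 2 + ε ^ 2 with hDdef
  have hD0 : 0 < D := by positivity
  have hεs : 0 < ε ^ s := Real.rpow_pos_of_pos hε0 s
  -- |β| bounds
  have hβlow : |b₀| / 2 ≤ |β| := by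
    have h1 : |b₀| - |β| ≤ |β - b₀| := by
      have := abs_sub_abs_le_abs_sub b₀ β
      rwa [abs_sub_comm] at this
    linarith [le_trans hβb hsmall]
  have hβhigh : |β| ≤ 3 / 2 * |b₀| := by
    have h1 : |β| - |b₀| ≤ |β - b₀| := abs_sub_abs_le_abs_sub β b₀
    linarith [le_trans hβb hsmall]
  -- D lower bound
  have hDm : m * (ε ^ 2 + τ ^ 2) ≤ D := by
    have hβ2 : b₀ ^ 2 / 4 ≤ β ^ 2 := by
      nlinarith [mul_self_le_mul_self (by positivity : (0:ℝ) ≤ |b₀| / 2) hβlow,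
        sq_abs β, sq_abs b₀]
    have hm1 : m ≤ 1 := min_le_right _ _
    have hm2 : m ≤ b₀ ^ 2 / 4 := min_le_left _ _
    nlinarith [sq_nonneg τ, sq_nonneg ε]
  -- rewrite the matrix as a • K + c • 1
  set a : ℝ := D⁻¹ * (β * τ ^ 2) - b₀⁻¹ with ha
  set c : ℝ := D⁻¹ * (ε * τ) with hc
  have hmat : (D⁻¹ • ((β * τ ^ 2) • K + (ε * τ) • (1 : Matrix (Fin 2) (Fin 2) ℝ))
      - b₀⁻¹ • K) = a • K + c • (1 : Matrix (Fin 2) (Fin 2) ℝ) := by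
    rw [ha, hc]
    module
  rw [hmat, map_add, map_smul, map_smul, map_one]
  have hnorm : ‖a • Matrix.toEuclideanCLM (𝕜 := ℝ) K +
      c • (1 : EuclideanSpace ℝ (Fin 2) →L[ℝ] EuclideanSpace ℝ (Fin 2))‖ ≤ |a| + |c| := by
    calc _ ≤ ‖a • Matrix.toEuclideanCLM (𝕜 := ℝ) K‖ +
        ‖c • (1 : EuclideanSpace ℝ (Fin 2) →L[ℝ] EuclideanSpace ℝ (Fin 2))‖ := norm_add_le _ _
      _ = |a| + |c| := by
        rw [norm_smul a (Matrix.toEuclideanCLM (𝕜 := ℝ) K),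
          norm_smul c (1 : EuclideanSpace ℝ (Fin 2) →L[ℝ] EuclideanSpace ℝ (Fin 2)),
          hnormK, norm_one, Real.norm_eq_abs, Real.norm_eq_abs, mul_one, mul_one]
  refine hnorm.trans ?_
  set N : ℝ := ε ^ s * τ ^ 2 + ε ^ 2 + ε * τ with hN
  have hN0 : 0 < N := by positivity
  have hden : 0 < ε ^ 2 + τ ^ 2 := by positivity
  -- bound |a|
  have haval : a = (β * τ ^ 2 * b₀ - D) / (D * b₀) := by
    field_simp [ha]
    rw [ha]; field_simp
  have hnum : |β * τ ^ 2 * b₀ - D| ≤ (3 / 2) * |b₀| * Cb * ε ^ s * τ ^ 2 + ε ^ 2 := by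
    have h1 : β * τ ^ 2 * b₀ - D = β * τ ^ 2 * (b₀ - β) - ε ^ 2 := by rw [hDdef]; ring
    rw [h1]
    calc |β * τ ^ 2 * (b₀ - β) - ε ^ 2| ≤ |β * τ ^ 2 * (b₀ - β)| + |ε ^ 2| := abs_sub _ _
      _ = |β| * τ ^ 2 * |b₀ - β| + ε ^ 2 := by
          rw [abs_mul, abs_mul, abs_of_nonneg (by positivity : (0:ℝ) ≤ τ ^ 2),
            abs_of_nonneg (by positivity : (0:ℝ) ≤ ε ^ 2)]
      _ ≤ (3 / 2 * |b₀|) * τ ^ 2 * (Cb * ε ^ s) + ε ^ 2 := by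
          have hb' : |b₀ - β| ≤ Cb * ε ^ s := abs_sub_comm b₀ β ▸ hβb
          have h2 : |β| * |b₀ - β| ≤ 3 / 2 * |b₀| * (Cb * ε ^ s) :=
            mul_le_mul hβhigh hb' (abs_nonneg _) (by positivity)
          nlinarith [mul_le_mul_of_nonneg_right h2 (sq_nonneg τ)]
      _ = (3 / 2) * |b₀| * Cb * ε ^ s * τ ^ 2 + ε ^ 2 := by ring
  have haabs : |a| ≤ ((3 / 2) * |b₀| * Cb * ε ^ s * τ ^ 2 + ε ^ 2) / (D * |b₀|) := by
    rw [haval, abs_div, abs_mul, abs_of_pos hD0]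
    exact div_le_div_of_nonneg_right hnum (by positivity) |>.trans le_rfl
  have ha2 : |a| ≤ (((3 / 2) * |b₀| * Cb + 1) / (m * |b₀|)) * (N / (ε ^ 2 + τ ^ 2)) := by
    refine haabs.trans ?_
    have hnum2 : (3 / 2) * |b₀| * Cb * ε ^ s * τ ^ 2 + ε ^ 2 ≤
        ((3 / 2) * |b₀| * Cb + 1) * N := by
      rw [hN]
      nlinarith [mul_pos hε0 hτ, mul_pos hεs (mul_pos hτ hτ), sq_nonneg ε, sq_nonneg τ,
        mul_pos hb₀' hCb, mul_nonneg (mul_nonneg (mul_nonneg (by norm_num : (0:ℝ) ≤ 3/2)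
          (abs_nonneg b₀)) hCb.le) (mul_pos hε0 hτ).le, hεs.le]
    have hden2 : m * |b₀| * (ε ^ 2 + τ ^ 2) ≤ D * |b₀| := by
      have := mul_le_mul_of_nonneg_right hDm (abs_nonneg b₀)
      nlinarith [this]
    calc ((3 / 2) * |b₀| * Cb * ε ^ s * τ ^ 2 + ε ^ 2) / (D * |b₀|)
        ≤ (((3 / 2) * |b₀| * Cb + 1) * N) / (m * |b₀| * (ε ^ 2 + τ ^ 2)) :=
          div_le_div₀ (by positivity) hnum2 (by positivity) hden2
      _ = (((3 / 2) * |b₀| * Cb + 1) / (m * |b₀|)) * (N / (ε ^ 2 + τ ^ 2)) := by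
          field_simp
  have hc2 : |c| ≤ (1 / m) * (N / (ε ^ 2 + τ ^ 2)) := by
    have hcval : |c| = ε * τ / D := by
      rw [hc, abs_mul, abs_inv, abs_of_pos hD0, abs_mul,
        abs_of_pos hε0, abs_of_pos hτ, inv_mul_eq_div]
    rw [hcval]
    have hετN : ε * τ ≤ N := by rw [hN]; nlinarith [mul_pos hεs (mul_pos hτ hτ), sq_nonneg ε]
    calc ε * τ / D ≤ N / (m * (ε ^ 2 + τ ^ 2)) :=
        div_le_div₀ hN0.le hετN (by positivity) hDm
      _ = (1 / m) * (N / (ε ^ 2 + τ ^ 2)) := by field_simp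
  calc |a| + |c| ≤ (((3 / 2) * |b₀| * Cb + 1) / (m * |b₀|)) * (N / (ε ^ 2 + τ ^ 2))
        + (1 / m) * (N / (ε ^ 2 + τ ^ 2)) := add_le_add ha2 hc2
    _ = (((3 / 2) * |b₀| * Cb + 1) / (m * |b₀|) + 1 / m) * (N / (ε ^ 2 + τ ^ 2)) := by ring
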